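/- Let scalars k^{(i)}_{st} ∈ k be given for 1 ≤ i, s, t ≤ n. Then in V^{⊗(n+1)}: (1) ∑_{j=1}^{n} ∑_{s,t=1}^{n} k^{(j)}_{st} · r_{1,…,j−1,s,j+1,…,n} ⊗ x_t = r_{1 2 ⋯ n} ⊗ (∑_{s,t=1}^{n} k^{(s)}_{st} x_t), and (2) ∑_{j=1}^{n} ∑_{s,t=1}^{n} k^{(j)}_{st} · x_s ⊗ r_{1,…,j−1,t,j+1,…,n} = (∑_{s,t=1}^{n} k^{(t)}_{st} x_s) ⊗ r_{1 2 ⋯ n}. Here r_{1,…,j−1,s,j+1,…,n} denotes the element associated with the index sequence obtained from (1,2,…,n) by replacing the j-th entry by s. Consequently, if δ is the linear map V → V⊗V with δ(x_i) = ∑_{s,t} k^{(i)}_{st} x_s⊗x_t, the two vectors appearing on the right-hand sides sum to ∑_{s=1}^{n} ∑_{t=1}^{n} (k^{(s)}_{st} + k^{(s)}_{ts}) x_t, the divergence of δ. -/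

import Mathlib

open scoped TensorProduct
open PiTensorProduct

namespace OrePaper

variable (k : Type*) [Field k] (V : Type*) [AddCommGroup V] [Module k V]

/-- The canonical isomorphism `V^{⊗a} ⊗ V^{⊗b} ≃ V^{⊗(a+b)}`. -/
noncomputable abbrev mulPow (a b : ℕ) :
    ((⨂[k]^a V) ⊗[k] (⨂[k]^b V)) ≃ₗ[k] ⨂[k]^(a+b) V :=
  TensorPower.mulEquiv

variable {k V}

/-- Identification of `V` with `V^{⊗1}`. -/
noncomputable def toPow1 : V ≃ₗ[k] ⨂[k]^1 V :=
  (PiTensorProduct.subsingletonEquiv (s := fun _ : Fin 1 => V) (0 : Fin 1)).symm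

/-- `w ⊗ v ∈ V^{⊗(m+1)}` for `w ∈ V^{⊗m}`, `v ∈ V`. -/
noncomputable def append {m : ℕ} (w : ⨂[k]^m V) (v : V) : ⨂[k]^(m+1) V :=
  mulPow k V m 1 (w ⊗ₜ[k] toPow1 v)

/-- `v ⊗ w ∈ V^{⊗(m+1)}` for `v ∈ V`, `w ∈ V^{⊗m}`. -/
noncomputable def prepend {m : ℕ} (v : V) (w : ⨂[k]^m V) : ⨂[k]^(m+1) V :=
  TensorPower.cast k V (Nat.add_comm 1 m) (mulPow k V 1 m (toPow1 v ⊗ₜ[k] w))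

/-- The elements `r_{i_1 i_2 ⋯ i_m} ∈ V^{⊗m}`:
`r_{i_1 i_2} = x_{i_1} ⊗ x_{i_2} − x_{i_2} ⊗ x_{i_1}` and, recursively for `m ≥ 3`,
`r_{i_1 ⋯ i_m} = ∑_{j=1}^{m} (−1)^{m−j} r_{i_1 ⋯ î_j ⋯ i_m} ⊗ x_{i_j}`.
(For a single index we set `r_i = x_i`, which is the convention making the left-handed
expansion hold also for `m = 2`.) -/
noncomputable def rElt {n : ℕ} (x : Fin n → V) : (m : ℕ) → (Fin m → Fin n) → ⨂[k]^m V
  | 0, _ => 0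
  | 1, ι => toPow1 (x (ι 0))
  | 2, ι => append (toPow1 (x (ι 0))) (x (ι 1)) - append (toPow1 (x (ι 1))) (x (ι 0))
  | (m+3), ι => ∑ j : Fin (m+3),
      ((-1 : k)^((m+2) - (j : ℕ))) • append (rElt x (m+2) (ι ∘ j.succAbove)) (x (ι j))
/-! ### Auxiliary lemmas -/

lemma toPow1_apply (v : V) : (toPow1 v : ⨂[k]^1 V) = tprod k (fun _ => v) := by
  rw [toPow1, LinearEquiv.symm_apply_eq, subsingletonEquiv_apply_tprod]

lemma append_tprod {m : ℕ} (f : Fin m → V) (v : V) :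
    (append (PiTensorProduct.tprod k f) v : ⨂[k]^(m+1) V) = PiTensorProduct.tprod k (Fin.snoc f v) := by
  rw [append, toPow1_apply, ← TensorPower.gMul_def, TensorPower.tprod_mul_tprod,
    Fin.append_right_eq_snoc]

lemma append_smul_left {m : ℕ} (a : k) (w : ⨂[k]^m V) (v : V) :
    append (a • w) v = a • append w v := by
  rw [append, ← TensorProduct.smul_tmul', map_smul]; rfl

lemma append_zero_left {m : ℕ} (v : V) : (append (0 : ⨂[k]^m V) v) = 0 := by
  rw [append, TensorProduct.zero_tmul, map_zero]

lemma append_sum_left {m : ℕ} {α : Type*} (s : Finset α) (w : α → ⨂[k]^m V) (v : V) :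
    append (∑ a ∈ s, w a) v = ∑ a ∈ s, append (w a) v := by
  rw [append, TensorProduct.sum_tmul, map_sum]; rfl

lemma append_smul_right {m : ℕ} (w : ⨂[k]^m V) (a : k) (v : V) :
    append w (a • v) = a • append w v := by
  rw [append, map_smul, TensorProduct.tmul_smul, map_smul, append]

lemma append_sum_right {m : ℕ} {α : Type*} (s : Finset α) (w : ⨂[k]^m V) (v : α → V) :
    append w (∑ a ∈ s, v a) = ∑ a ∈ s, append w (v a) := by
  rw [append, map_sum, TensorProduct.tmul_sum, map_sum]; rfl

lemma prepend_smul_left {m : ℕ} (a : k) (v : V) (w : ⨂[k]^m V) :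
    prepend (a • v) w = a • prepend v w := by
  rw [prepend, map_smul, ← TensorProduct.smul_tmul', map_smul, map_smul]; rfl

lemma prepend_sum_left {m : ℕ} {α : Type*} (s : Finset α) (v : α → V) (w : ⨂[k]^m V) :
    prepend (∑ a ∈ s, v a) w = ∑ a ∈ s, prepend (v a) w := by
  rw [prepend, map_sum, TensorProduct.sum_tmul, map_sum, map_sum]; rfl

lemma prepend_zero_right {m : ℕ} (v : V) : (prepend v (0 : ⨂[k]^m V)) = 0 := by
  rw [prepend, TensorProduct.tmul_zero, map_zero, map_zero]

/-! ### The alternating sum -/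

/-- The full antisymmetrization `∑_σ sgn(σ) x_{ι(σ 1)} ⊗ ⋯ ⊗ x_{ι(σ m)}`. -/
noncomputable def altSum {n : ℕ} (x : Fin n → V) (m : ℕ) (ι : Fin m → Fin n) : ⨂[k]^m V :=
  ∑ σ : Equiv.Perm (Fin m),
    (((Equiv.Perm.sign σ : ℤ) : k)) • tprod k (fun i => x (ι (σ i)))

lemma altSum_eq_zero {n m : ℕ} (x : Fin n → V) (ι : Fin m → Fin n) {p q : Fin m}
    (hpq : p ≠ q) (hι : ι p = ι q) : altSum (k := k) x m ι = 0 := by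
  rw [altSum]
  refine Finset.sum_involution (fun σ _ => Equiv.swap p q * σ) ?_ ?_
    (fun _ _ => Finset.mem_univ _) ?_
  · intro σ _
    have h1 : (fun i => x (ι ((Equiv.swap p q * σ) i))) = fun i => x (ι (σ i)) := by
      funext i
      simp only [Equiv.Perm.mul_apply]
      rcases eq_or_ne (σ i) p with h | h
      · rw [h, Equiv.swap_apply_left, ← hι]
      rcases eq_or_ne (σ i) q with h' | h'
      · rw [h', Equiv.swap_apply_right, hι]
      · rw [Equiv.swap_apply_of_ne_of_ne h h']
    rw [h1, Equiv.Perm.sign_mul, Equiv.Perm.sign_swap hpq, ← add_smul]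
    norm_num
  · intro σ _ _
    intro hc
    have h2 : Equiv.swap p q = 1 := by
      have := congrArg (· * σ⁻¹) hc
      simpa [mul_assoc] using this
    exact hpq (Equiv.swap_eq_one_iff.mp h2)
  · intro σ _
    rw [← mul_assoc, Equiv.swap_mul_self, one_mul]

/-! ### Laplace expansion of the alternating sum along the last slot -/

/-- Adjustment permutation used in `insEquiv`. -/
noncomputable def cyc {m : ℕ} (p : Fin (m+1)) : Equiv.Perm (Fin m) :=
  Fin.cases 1 (fun i => Fin.cycleRange i) p

@[simp] lemma cyc_zero {m : ℕ} : (cyc (0 : Fin (m+1))) = 1 := rfl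

@[simp] lemma cyc_succ {m : ℕ} (i : Fin m) : cyc i.succ = i.cycleRange := by
  rw [cyc, Fin.cases_succ]

lemma decompose_symm_apply_succ {m : ℕ} (p : Fin (m+1)) (τ : Equiv.Perm (Fin m)) (i : Fin m) :
    Equiv.Perm.decomposeFin.symm (p, τ) i.succ = p.succAbove (cyc p (τ i)) := by
  induction p using Fin.cases with
  | zero =>
      rw [Equiv.Perm.decomposeFin_symm_apply_succ, cyc_zero, Equiv.swap_self,
        Fin.succAbove_zero]
      rfl
  | succ j =>
      rw [Equiv.Perm.decomposeFin_symm_apply_succ, cyc_succ, Fin.succAbove_cycleRange]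

lemma sign_aux {m : ℕ} (p : Fin (m+1)) :
    (ite (p = 0) 1 (-1) : ℤˣ) * Equiv.Perm.sign (cyc p) = (-1)^(p : ℕ) := by
  induction p using Fin.cases with
  | zero => simp
  | succ j =>
      rw [if_neg (Fin.succ_ne_zero j), cyc_succ, Fin.sign_cycleRange, Fin.val_succ, pow_succ,
        mul_comm]

/-- The bijection `(j, σ) ↦ e` with `e (last) = j` and `e (castSucc i) = j.succAbove (σ i)`. -/
noncomputable def insEquiv (m : ℕ) :
    Fin (m+1) × Equiv.Perm (Fin m) ≃ Equiv.Perm (Fin (m+1)) :=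
  ((Equiv.prodShear (Fin.revPerm : Equiv.Perm (Fin (m+1)))
      (fun j => (Equiv.permCongr Fin.revPerm).trans (Equiv.mulLeft (cyc j.rev)⁻¹))).trans
    Equiv.Perm.decomposeFin.symm).trans (Equiv.permCongr Fin.revPerm)

lemma insEquiv_apply {m : ℕ} (j : Fin (m+1)) (σ : Equiv.Perm (Fin m)) :
    insEquiv m (j, σ) = (Equiv.permCongr Fin.revPerm)
      (Equiv.Perm.decomposeFin.symm
        (j.rev, (cyc j.rev)⁻¹ * (Equiv.permCongr Fin.revPerm σ))) := rfl

lemma insEquiv_last {m : ℕ} (j : Fin (m+1)) (σ : Equiv.Perm (Fin m)) :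
    insEquiv m (j, σ) (Fin.last m) = j := by
  rw [insEquiv_apply, Equiv.permCongr_apply]
  simp only [Fin.revPerm_symm, Fin.revPerm_apply, Fin.rev_last,
    Equiv.Perm.decomposeFin_symm_apply_zero, Fin.rev_rev]

lemma insEquiv_castSucc {m : ℕ} (j : Fin (m+1)) (σ : Equiv.Perm (Fin m)) (i : Fin m) :
    insEquiv m (j, σ) (Fin.castSucc i) = j.succAbove (σ i) := by
  rw [insEquiv_apply, Equiv.permCongr_apply]
  simp only [Fin.revPerm_symm, Fin.revPerm_apply, Fin.rev_castSucc]
  rw [decompose_symm_apply_succ]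
  simp only [Equiv.Perm.mul_apply, Equiv.permCongr_apply, Fin.revPerm_symm,
    Fin.revPerm_apply, Fin.rev_rev, Equiv.Perm.inv_def, Equiv.apply_symm_apply]
  rw [Fin.rev_succAbove, Fin.rev_rev, Fin.rev_rev]

lemma sign_insEquiv {m : ℕ} (j : Fin (m+1)) (σ : Equiv.Perm (Fin m)) :
    Equiv.Perm.sign (insEquiv m (j, σ))
      = (-1)^(m - (j : ℕ)) * Equiv.Perm.sign σ := by
  rw [insEquiv_apply, Equiv.Perm.sign_permCongr, Equiv.Perm.decomposeFin.symm_sign,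
    Equiv.Perm.sign_mul, Equiv.Perm.sign_inv, Equiv.Perm.sign_permCongr, ← mul_assoc,
    sign_aux]
  congr 2
  rw [Fin.val_rev]
  omega

lemma altSum_succ {n : ℕ} (x : Fin n → V) (m : ℕ) (ι : Fin (m+1) → Fin n) :
    altSum (k := k) x (m+1) ι
      = ∑ j : Fin (m+1), ((-1 : k)^(m - (j : ℕ))) •
          append (altSum x m (ι ∘ j.succAbove)) (x (ι j)) := by
  rw [altSum, ← Equiv.sum_comp (insEquiv m)
      (fun e => (((Equiv.Perm.sign e : ℤ) : k)) • tprod k (fun i => x (ι (e i)))),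
    Fintype.sum_prod_type]
  refine Finset.sum_congr rfl fun j _ => ?_
  rw [altSum, append_sum_left, Finset.smul_sum]
  refine Finset.sum_congr rfl fun σ _ => ?_
  rw [append_smul_left, append_tprod, smul_smul]
  have htp : (fun i => x (ι (insEquiv m (j, σ) i)))
      = Fin.snoc (fun i => x ((ι ∘ j.succAbove) (σ i))) (x (ι j)) := by
    funext i
    induction i using Fin.lastCases with
    | last => rw [Fin.snoc_last, insEquiv_last]
    | cast i => rw [Fin.snoc_castSucc, insEquiv_castSucc]; rfl
  rw [htp]
  congr 1
  rw [sign_insEquiv]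
  push_cast
  ring

/-! ### `rElt` equals the alternating sum -/

lemma altSum_one {n : ℕ} (x : Fin n → V) (ι : Fin 1 → Fin n) :
    altSum (k := k) x 1 ι = toPow1 (x (ι 0)) := by
  rw [altSum, toPow1_apply, Fintype.sum_subsingleton _ 1]
  simp only [_root_.map_one, Units.val_one, Int.cast_one, one_smul]
  congr 1
  funext i
  exact congrArg (fun z => x (ι z)) (Subsingleton.elim _ _)

lemma rElt_eq_altSum {n : ℕ} (x : Fin n → V) :
    ∀ m, 1 ≤ m → ∀ ι : Fin m → Fin n, rElt (k := k) x m ι = altSum x m ι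
  | 1, _, ι => by rw [rElt, altSum_one]
  | 2, _, ι => by
      rw [rElt, altSum_succ x 1 ι, Fin.sum_univ_two, altSum_one, altSum_one]
      have h0 : ((0 : Fin 2).succAbove 0) = 1 := rfl
      have h1 : ((1 : Fin 2).succAbove 0) = 0 := rfl
      simp only [Function.comp_apply, h0, h1]
      norm_num
      abel
  | (m+3), _, ι => by
      rw [rElt, altSum_succ x (m+2) ι]
      refine Finset.sum_congr rfl fun j _ => ?_
      rw [rElt_eq_altSum x (m+2) (by omega) (ι ∘ j.succAbove)]

/-- The key computation in the proof of **Theorem 4.1**: for scalars `k^{(i)}_{st}`,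
`∑_{j,s,t} k^{(j)}_{st} r_{1,…,j−1,s,j+1,…,n} ⊗ x_t = r_{1⋯n} ⊗ (∑_{s,t} k^{(s)}_{st} x_t)`,
`∑_{j,s,t} k^{(j)}_{st} x_s ⊗ r_{1,…,j−1,t,j+1,…,n} = (∑_{s,t} k^{(t)}_{st} x_s) ⊗ r_{1⋯n}`,
and the two right-hand side vectors sum to the divergence
`∑_{s,t} (k^{(s)}_{st} + k^{(s)}_{ts}) x_t`. -/
theorem thm_4_1_key {n : ℕ} (hn : 2 ≤ n) (b : Module.Basis (Fin n) k V)
    (K : Fin n → Fin n → Fin n → k) :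
    (∑ j : Fin n, ∑ s : Fin n, ∑ t : Fin n,
        K j s t •
          (append (rElt (k := k) (fun i => b i) n (Function.update (fun p : Fin n => p) j s))
            (b t) : ⨂[k]^(n+1) V)
      = append (rElt (k := k) (fun i => b i) n (fun p : Fin n => p))
          (∑ s : Fin n, ∑ t : Fin n, K s s t • b t))
    ∧ (∑ j : Fin n, ∑ s : Fin n, ∑ t : Fin n,
        K j s t •
          (prepend (b s)
              (rElt (k := k) (fun i => b i) n (Function.update (fun p : Fin n => p) j t))
            : ⨂[k]^(n+1) V)
      = prepend (∑ s : Fin n, ∑ t : Fin n, K t s t • b s)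
          (rElt (k := k) (fun i => b i) n (fun p : Fin n => p)))
    ∧ ((∑ s : Fin n, ∑ t : Fin n, K s s t • b t)
        + (∑ s : Fin n, ∑ t : Fin n, K t s t • b s)
      = ∑ s : Fin n, ∑ t : Fin n, (K s s t + K s t s) • (b t : V)) := by
  have hone : 1 ≤ n := by omega
  set x : Fin n → V := fun i => b i with hx
  have hid : ∀ j : Fin n, Function.update (fun p : Fin n => p) j j = fun p : Fin n => p :=
    fun j => Function.update_eq_self _ _
  have hzero : ∀ j s : Fin n, s ≠ j →
      rElt (k := k) x n (Function.update (fun p : Fin n => p) j s) = 0 := by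
    intro j s hsj
    rw [rElt_eq_altSum x n hone]
    refine altSum_eq_zero x _ (p := j) (q := s) (Ne.symm hsj) ?_
    rw [Function.update_self, Function.update_of_ne hsj]
  refine ⟨?_, ?_, ?_⟩
  · have hrhs : append (rElt (k := k) x n (fun p : Fin n => p))
          (∑ s : Fin n, ∑ t : Fin n, K s s t • b t)
        = ∑ s : Fin n, ∑ t : Fin n,
            K s s t • append (rElt (k := k) x n (fun p : Fin n => p)) (b t) := by
      rw [append_sum_right]
      refine Finset.sum_congr rfl fun s _ => ?_
      rw [append_sum_right]
      exact Finset.sum_congr rfl fun t _ => append_smul_right _ _ _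
    rw [hrhs]
    refine Finset.sum_congr rfl fun j _ => ?_
    rw [Finset.sum_eq_single j]
    · rw [hid j]
    · intro s _ hs
      simp only [hzero j s hs, append_zero_left, smul_zero, Finset.sum_const_zero]
    · intro h
      exact absurd (Finset.mem_univ j) h
  · have hrhs : prepend (∑ s : Fin n, ∑ t : Fin n, K t s t • b s)
          (rElt (k := k) x n (fun p : Fin n => p))
        = ∑ s : Fin n, ∑ t : Fin n,
            K t s t • prepend (b s) (rElt (k := k) x n (fun p : Fin n => p)) := by
      rw [prepend_sum_left]
      refine Finset.sum_congr rfl fun s _ => ?_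
      rw [prepend_sum_left]
      exact Finset.sum_congr rfl fun t _ => prepend_smul_left _ _ _
    rw [hrhs]
    calc (∑ j : Fin n, ∑ s : Fin n, ∑ t : Fin n,
            K j s t • (prepend (b s)
              (rElt (k := k) x n (Function.update (fun p : Fin n => p) j t))
              : ⨂[k]^(n+1) V))
        = ∑ j : Fin n, ∑ s : Fin n,
            K j s j • prepend (b s) (rElt (k := k) x n (fun p : Fin n => p)) := by
          refine Finset.sum_congr rfl fun j _ => Finset.sum_congr rfl fun s _ => ?_
          rw [Finset.sum_eq_single j]
          · rw [hid j]
          · intro t _ ht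
            rw [hzero j t ht, prepend_zero_right, smul_zero]
          · intro h
            exact absurd (Finset.mem_univ j) h
      _ = _ := Finset.sum_comm
  · have h2 : (∑ s : Fin n, ∑ t : Fin n, K t s t • (b s : V))
        = ∑ s : Fin n, ∑ t : Fin n, K s t s • (b t : V) := Finset.sum_comm
    rw [h2, ← Finset.sum_add_distrib]
    refine Finset.sum_congr rfl fun s _ => ?_
    rw [← Finset.sum_add_distrib]
    exact Finset.sum_congr rfl fun t _ => (add_smul _ _ _).symm


end OrePaper
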